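/- Let d ≥ 1 be an integer and v ≥ 0 a real number. For all real numbers 0 ≤ x₁ ≤ x₂ and 0 ≤ y₂ ≤ y₁, the cost c_RLF satisfies the submodularity inequality c_RLF(x₁, y₁) + c_RLF(x₂, y₂) ≤ c_RLF(x₁, y₂) + c_RLF(x₂, y₁). Equivalently, the double sum Σ_{k=0}^∞ (v^{2k}/(4^k k! Γ(k+d/2))) Σ_{i=0}^k binom(k,i) [(y₂²)^{k−i} − (y₁²)^{k−i}]·[(x₂²)^i − (x₁²)^i] is non-positive. -/

import Mathlib

noncomputable section

/-- The random Laplace feature cost function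
`c_RLF(x,y) = Σ_k v^(2k) (x² + y²)^k / (4^k k! Γ(k + d/2))`. -/
def cRLF (d : ℕ) (v : ℝ) (x y : ℝ) : ℝ :=
  ∑' k : ℕ,
    v ^ (2 * k) * (x ^ 2 + y ^ 2) ^ k /
      (4 ^ k * (Nat.factorial k) * Real.Gamma ((k : ℝ) + d / 2))

lemma cRLF_den_pos (d : ℕ) (hd : 1 ≤ d) (k : ℕ) :
    0 < (4 : ℝ) ^ k * (Nat.factorial k) * Real.Gamma ((k : ℝ) + d / 2) := by
  have h1 : (0 : ℝ) < (k : ℝ) + d / 2 := by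
    have : (1 : ℝ) ≤ (d : ℝ) := by exact_mod_cast hd
    positivity
  have := Real.Gamma_pos_of_pos h1
  positivity

lemma cRLF_summable (d : ℕ) (hd : 1 ≤ d) (v : ℝ) (s : ℝ) (hs : 0 ≤ s) :
    Summable (fun k : ℕ => v ^ (2 * k) * s ^ k /
      (4 ^ k * (Nat.factorial k) * Real.Gamma ((k : ℝ) + d / 2))) := by
  set f : ℕ → ℝ := fun k => v ^ (2 * k) * s ^ k /
      (4 ^ k * (Nat.factorial k) * Real.Gamma ((k : ℝ) + d / 2)) with hf
  have hfnonneg : ∀ k, 0 ≤ f k := by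
    intro k
    have := cRLF_den_pos d hd k
    have hv2 : 0 ≤ v ^ (2 * k) := by
      rw [pow_mul]; positivity
    positivity
  apply summable_of_ratio_norm_eventually_le (r := 1/2) (by norm_num)
  rw [Filter.eventually_atTop]
  refine ⟨⌈v ^ 2 * s⌉₊, fun k hk => ?_⟩
  have hden := cRLF_den_pos d hd k
  have hdpos : (0 : ℝ) < (k : ℝ) + d / 2 := by
    have : (1 : ℝ) ≤ (d : ℝ) := by exact_mod_cast hd
    positivity
  have hrec : f (k + 1) = f k * (v ^ 2 * s / (4 * (k + 1) * ((k : ℝ) + d / 2))) := by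
    have hG : Real.Gamma (((k + 1 : ℕ) : ℝ) + d / 2)
        = ((k : ℝ) + d / 2) * Real.Gamma ((k : ℝ) + d / 2) := by
      have : (((k + 1 : ℕ) : ℝ) + d / 2) = ((k : ℝ) + d / 2) + 1 := by push_cast; ring
      rw [this, Real.Gamma_add_one (ne_of_gt hdpos)]
    simp only [hf]
    rw [hG, Nat.factorial_succ]
    have hGne : Real.Gamma ((k : ℝ) + d / 2) ≠ 0 := by
      have := cRLF_den_pos d hd k
      intro h; rw [h] at this; simp at this
    field_simp
    push_cast
    ring
  have hratio : v ^ 2 * s / (4 * (k + 1) * ((k : ℝ) + d / 2)) ≤ 1 / 2 := by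
    rw [div_le_div_iff₀ (by positivity) (by norm_num)]
    have h1 : v ^ 2 * s ≤ (k : ℝ) + 1 := by
      calc v ^ 2 * s ≤ (⌈v ^ 2 * s⌉₊ : ℝ) := Nat.le_ceil _
        _ ≤ (k : ℝ) := by exact_mod_cast hk
        _ ≤ (k : ℝ) + 1 := by linarith
    have h2 : (1 : ℝ) / 2 ≤ (k : ℝ) + d / 2 := by
      have : (1 : ℝ) ≤ (d : ℝ) := by exact_mod_cast hd
      have hk0 : (0 : ℝ) ≤ (k : ℝ) := Nat.cast_nonneg k
      linarith
    nlinarith [Nat.cast_nonneg (α := ℝ) k]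
  rw [Real.norm_eq_abs, Real.norm_eq_abs, abs_of_nonneg (hfnonneg _),
    abs_of_nonneg (hfnonneg _), hrec]
  calc f k * (v ^ 2 * s / (4 * (k + 1) * ((k : ℝ) + d / 2)))
      ≤ f k * (1 / 2) := by
        apply mul_le_mul_of_nonneg_left hratio (hfnonneg k)
    _ = 1 / 2 * f k := by ring

lemma pow_rearrange (A B C D : ℝ) (hA : 0 ≤ A) (hAB : A ≤ B) (hC : 0 ≤ C) (hCD : C ≤ D)
    (k : ℕ) : (A + D) ^ k + (B + C) ^ k ≤ (A + C) ^ k + (B + D) ^ k := by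
  have expand : ∀ t : ℝ, (B + t) ^ k - (A + t) ^ k
      = ∑ i ∈ Finset.range (k + 1), (B ^ i - A ^ i) * t ^ (k - i) * (k.choose i : ℝ) := by
    intro t
    rw [add_pow, add_pow, ← Finset.sum_sub_distrib]
    exact Finset.sum_congr rfl fun i _ => by ring
  have h : (B + C) ^ k - (A + C) ^ k ≤ (B + D) ^ k - (A + D) ^ k := by
    rw [expand, expand]
    apply Finset.sum_le_sum
    intro i _
    have h1 : 0 ≤ B ^ i - A ^ i := sub_nonneg.2 (pow_le_pow_left₀ hA hAB i)
    have h2 : C ^ (k - i) ≤ D ^ (k - i) := pow_le_pow_left₀ hC hCD _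
    have h3 : 0 ≤ C ^ (k - i) := pow_nonneg hC _
    have h4 : (0 : ℝ) ≤ (k.choose i : ℝ) := Nat.cast_nonneg _
    exact mul_le_mul_of_nonneg_right (mul_le_mul_of_nonneg_left h2 h1) h4
  linarith

/-- The cost `c_RLF` is submodular: for `0 ≤ x₁ ≤ x₂` and `0 ≤ y₂ ≤ y₁`,
`c_RLF(x₁,y₁) + c_RLF(x₂,y₂) ≤ c_RLF(x₁,y₂) + c_RLF(x₂,y₁)`; equivalently the corresponding
binomial double sum is non-positive. -/
theorem cRLF_submodular (d : ℕ) (hd : 1 ≤ d) (v : ℝ) (hv : 0 ≤ v)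
    (x₁ x₂ y₁ y₂ : ℝ) (hx₁ : 0 ≤ x₁) (hx : x₁ ≤ x₂) (hy₂ : 0 ≤ y₂) (hy : y₂ ≤ y₁) :
    (cRLF d v x₁ y₁ + cRLF d v x₂ y₂ ≤ cRLF d v x₁ y₂ + cRLF d v x₂ y₁) ∧
      (∑' k : ℕ,
          v ^ (2 * k) / (4 ^ k * (Nat.factorial k) * Real.Gamma ((k : ℝ) + d / 2)) *
            ∑ i ∈ Finset.range (k + 1),
              (k.choose i : ℝ) * ((y₂ ^ 2) ^ (k - i) - (y₁ ^ 2) ^ (k - i)) *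
                ((x₂ ^ 2) ^ i - (x₁ ^ 2) ^ i)) ≤ 0 := by
  have hA : (0 : ℝ) ≤ x₁ ^ 2 := sq_nonneg _
  have hAB : x₁ ^ 2 ≤ x₂ ^ 2 := pow_le_pow_left₀ hx₁ hx 2
  have hC : (0 : ℝ) ≤ y₂ ^ 2 := sq_nonneg _
  have hCD : y₂ ^ 2 ≤ y₁ ^ 2 := pow_le_pow_left₀ hy₂ hy 2
  constructor
  · have S11 := cRLF_summable d hd v (x₁ ^ 2 + y₁ ^ 2) (by positivity)
    have S22 := cRLF_summable d hd v (x₂ ^ 2 + y₂ ^ 2) (by positivity)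
    have S12 := cRLF_summable d hd v (x₁ ^ 2 + y₂ ^ 2) (by positivity)
    have S21 := cRLF_summable d hd v (x₂ ^ 2 + y₁ ^ 2) (by positivity)
    unfold cRLF
    rw [← Summable.tsum_add S11 S22, ← Summable.tsum_add S12 S21]
    apply Summable.tsum_le_tsum _ (S11.add S22) (S12.add S21)
    intro k
    have hden := cRLF_den_pos d hd k
    have hcoef : 0 ≤ v ^ (2 * k) / (4 ^ k * (Nat.factorial k) * Real.Gamma ((k : ℝ) + d / 2)) := by
      have hv2 : 0 ≤ v ^ (2 * k) := by rw [pow_mul]; positivity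
      positivity
    have key := pow_rearrange (x₁ ^ 2) (x₂ ^ 2) (y₂ ^ 2) (y₁ ^ 2) hA hAB hC hCD k
    have e : ∀ s : ℝ, v ^ (2 * k) * s ^ k / (4 ^ k * (Nat.factorial k) *
        Real.Gamma ((k : ℝ) + d / 2)) = v ^ (2 * k) / (4 ^ k * (Nat.factorial k) *
        Real.Gamma ((k : ℝ) + d / 2)) * s ^ k := fun s => by ring
    rw [e, e, e, e]
    calc _ = v ^ (2 * k) / (4 ^ k * (Nat.factorial k) * Real.Gamma ((k : ℝ) + d / 2)) *
          ((x₁ ^ 2 + y₁ ^ 2) ^ k + (x₂ ^ 2 + y₂ ^ 2) ^ k) := by ring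
      _ ≤ v ^ (2 * k) / (4 ^ k * (Nat.factorial k) * Real.Gamma ((k : ℝ) + d / 2)) *
          ((x₁ ^ 2 + y₂ ^ 2) ^ k + (x₂ ^ 2 + y₁ ^ 2) ^ k) :=
        mul_le_mul_of_nonneg_left key hcoef
      _ = _ := by ring
  · apply tsum_nonpos
    intro k
    have hden := cRLF_den_pos d hd k
    have hcoef : 0 ≤ v ^ (2 * k) / (4 ^ k * (Nat.factorial k) * Real.Gamma ((k : ℝ) + d / 2)) := by
      have hv2 : 0 ≤ v ^ (2 * k) := by rw [pow_mul]; positivity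
      positivity
    have hsum : (∑ i ∈ Finset.range (k + 1),
        (k.choose i : ℝ) * ((y₂ ^ 2) ^ (k - i) - (y₁ ^ 2) ^ (k - i)) *
          ((x₂ ^ 2) ^ i - (x₁ ^ 2) ^ i)) ≤ 0 := by
      apply Finset.sum_nonpos
      intro i _
      have h1 : (y₂ ^ 2) ^ (k - i) - (y₁ ^ 2) ^ (k - i) ≤ 0 :=
        sub_nonpos.2 (pow_le_pow_left₀ hC hCD _)
      have h2 : 0 ≤ (x₂ ^ 2) ^ i - (x₁ ^ 2) ^ i :=
        sub_nonneg.2 (pow_le_pow_left₀ hA hAB _)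
      have h3 : (0 : ℝ) ≤ (k.choose i : ℝ) := Nat.cast_nonneg _
      have := mul_nonpos_of_nonneg_of_nonpos h3 h1
      exact mul_nonpos_of_nonpos_of_nonneg this h2
    exact mul_nonpos_of_nonneg_of_nonpos hcoef hsum

end
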